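/- Let M, S be symmetric positive definite and Φ an n×r matrix of POD coefficient vectors with ΦᵀMΦ = I_r (M-orthonormal ROM basis). Define the FE-version filter F_FE = (M + δ²S)⁻¹M acting on ℝⁿ and the ROM-version filter F_ROM = (M_r + δ²S_r)⁻¹M_r on ℝʳ with M_r = ΦᵀMΦ, S_r = ΦᵀSΦ. If the range of Φ is invariant under M⁻¹S, then for every a ∈ ℝʳ, F_FE(Φ a) = Φ F_ROM(a). -/

import Mathlib

open Matrix in
lemma smul_posSemidef {n : ℕ} {A : Matrix (Fin n) (Fin n) ℝ} (hA : A.PosSemidef)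
    {c : ℝ} (hc : 0 ≤ c) : (c • A).PosSemidef := by
  rw [posSemidef_iff_dotProduct_mulVec]
  constructor
  · unfold Matrix.IsHermitian
    rw [conjTranspose_smul, hA.1]
    simp
  · intro x
    have := hA.dotProduct_mulVec_nonneg x
    simp only [smul_mulVec, dotProduct_smul, smul_eq_mul]
    positivity

open Matrix in
theorem stmt_18 {n r : ℕ} (M S : Matrix (Fin n) (Fin n) ℝ)
    (hM : M.PosDef) (hS : S.PosDef) (δ : ℝ) (hδ : 0 < δ)
    (Φ : Matrix (Fin n) (Fin r) ℝ) (hΦ : Φᵀ * M * Φ = 1)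
    (hinv : ∀ a : Fin r → ℝ, ∃ b : Fin r → ℝ,
      (M⁻¹ * S).mulVec (Φ.mulVec a) = Φ.mulVec b) :
    ∀ a : Fin r → ℝ,
      ((M + δ ^ 2 • S)⁻¹ * M).mulVec (Φ.mulVec a) =
        Φ.mulVec ((((Φᵀ * M * Φ) + δ ^ 2 • (Φᵀ * S * Φ))⁻¹ * (Φᵀ * M * Φ)).mulVec a) := by
  have hδ2 : (0:ℝ) < δ ^ 2 := by positivity
  set Sr : Matrix (Fin r) (Fin r) ℝ := Φᵀ * S * Φ with hSrdef
  have hSrsd : Sr.PosSemidef := by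
    have := hS.posSemidef.conjTranspose_mul_mul_same Φ
    simpa using this
  set B : Matrix (Fin r) (Fin r) ℝ := 1 + δ ^ 2 • Sr with hBdef
  have hBpd : B.PosDef :=
    Matrix.PosDef.add_posSemidef Matrix.PosDef.one (smul_posSemidef hSrsd hδ2.le)
  set A : Matrix (Fin n) (Fin n) ℝ := M + δ ^ 2 • S with hAdef
  have hApd : A.PosDef :=
    Matrix.PosDef.add_posSemidef hM (smul_posSemidef hS.posSemidef hδ2.le)
  have hMdet : IsUnit M.det := hM.det_pos.ne'.isUnit
  have hAdet : IsUnit A.det := hApd.det_pos.ne'.isUnit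
  have hBdet : IsUnit B.det := hBpd.det_pos.ne'.isUnit
  -- key per-vector identity: S (Φ y) = M (Φ (Sr y))
  have hkey : ∀ y : Fin r → ℝ, S.mulVec (Φ.mulVec y) = M.mulVec (Φ.mulVec (Sr.mulVec y)) := by
    intro y
    obtain ⟨b, hb⟩ := hinv y
    have hSy : S.mulVec (Φ.mulVec y) = M.mulVec (Φ.mulVec b) := by
      have := congrArg (fun v => M.mulVec v) hb
      simpa [mulVec_mulVec, ← Matrix.mul_assoc, Matrix.mul_nonsing_inv M hMdet] using this
    have hbSr : b = Sr.mulVec y := by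
      calc b = (Φᵀ * M * Φ).mulVec b := by rw [hΦ, one_mulVec]
        _ = Φᵀ.mulVec (M.mulVec (Φ.mulVec b)) := by simp [mulVec_mulVec, Matrix.mul_assoc]
        _ = Φᵀ.mulVec (S.mulVec (Φ.mulVec y)) := by rw [← hSy]
        _ = Sr.mulVec y := by simp [hSrdef, mulVec_mulVec, Matrix.mul_assoc]
    rw [hSy, hbSr]
  intro a
  rw [hΦ]
  set y : Fin r → ℝ := ((1 + δ ^ 2 • Sr)⁻¹ * 1).mulVec a with hy
  have hy' : y = B⁻¹.mulVec a := by rw [hy, Matrix.mul_one, hBdef]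
  -- A (Φ y) = M (Φ a)
  have hAy : A.mulVec (Φ.mulVec y) = M.mulVec (Φ.mulVec a) := by
    have hBy : B.mulVec y = a := by
      rw [hy', mulVec_mulVec, Matrix.mul_nonsing_inv B hBdet, one_mulVec]
    calc A.mulVec (Φ.mulVec y)
        = M.mulVec (Φ.mulVec y) + δ ^ 2 • S.mulVec (Φ.mulVec y) := by
          rw [hAdef, add_mulVec, smul_mulVec]
      _ = M.mulVec (Φ.mulVec y) + δ ^ 2 • M.mulVec (Φ.mulVec (Sr.mulVec y)) := by
          rw [hkey]
      _ = M.mulVec (Φ.mulVec (y + δ ^ 2 • Sr.mulVec y)) := by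
          rw [Matrix.mulVec_add, Matrix.mulVec_add, Matrix.mulVec_smul, Matrix.mulVec_smul]
      _ = M.mulVec (Φ.mulVec (B.mulVec y)) := by
          rw [hBdef, add_mulVec, one_mulVec, smul_mulVec]
      _ = M.mulVec (Φ.mulVec a) := by rw [hBy]
  calc (A⁻¹ * M).mulVec (Φ.mulVec a)
      = A⁻¹.mulVec (M.mulVec (Φ.mulVec a)) := by rw [← mulVec_mulVec]
    _ = A⁻¹.mulVec (A.mulVec (Φ.mulVec y)) := by rw [hAy]
    _ = Φ.mulVec y := by
        rw [mulVec_mulVec, Matrix.nonsing_inv_mul A hAdet, one_mulVec]
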